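/- Let A be a unital C*-algebra, p a projection in A, and J a self-adjoint involution with Jp + pJ = J. Then [p] = [(1+J)/2] and [p] = [(1−J)/2] in K₀(A); in particular 2[p] = [1] in K₀(A). -/

import Mathlib

open Matrix

/-- An element of a star ring is a projection if it is a self-adjoint idempotent. -/
def IsProjectionElem {A : Type*} [Mul A] [Star A] (p : A) : Prop :=
  p * p = p ∧ star p = p

/-- Formal generators for `K₀`: square matrices of arbitrary size over `A`. -/
def K0Gen (A : Type*) : Type _ := Σ n : ℕ, Matrix (Fin n) (Fin n) A

namespace K0Gen

variable {A : Type*} [Ring A] [StarRing A]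

/-- A generator is a projection if the matrix is a self-adjoint idempotent. -/
def IsProj (p : K0Gen A) : Prop := p.2 * p.2 = p.2 ∧ star p.2 = p.2

/-- Murray–von Neumann equivalence of matrix projections. -/
def MvN (p q : K0Gen A) : Prop :=
  ∃ v : Matrix (Fin q.1) (Fin p.1) A, vᴴ * v = p.2 ∧ v * vᴴ = q.2

/-- Block diagonal sum of matrix projections. -/
noncomputable def dsum (p q : K0Gen A) : K0Gen A :=
  ⟨p.1 + q.1, Matrix.reindex finSumFinEquiv finSumFinEquiv (Matrix.fromBlocks p.2 0 0 q.2)⟩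

end K0Gen

/-- The defining relations of `K₀(A)`: `[p ⊕ q] = [p] + [q]` for orthogonal block sums of
projections and `[p] = [q]` for Murray–von Neumann equivalent projections. -/
def K0Relations (A : Type*) [Ring A] [StarRing A] : Set (FreeAbelianGroup (K0Gen A)) :=
  {x | ∃ p q : K0Gen A, p.IsProj ∧ q.IsProj ∧
        (x = FreeAbelianGroup.of (p.dsum q) - FreeAbelianGroup.of p - FreeAbelianGroup.of q ∨
          (p.MvN q ∧ x = FreeAbelianGroup.of p - FreeAbelianGroup.of q))}

/-- The `K₀`-group of a unital ring with involution, presented by generators (projections in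
matrix algebras over `A`) and the standard relations. -/
def K0 (A : Type*) [Ring A] [StarRing A] : Type _ :=
  FreeAbelianGroup (K0Gen A) ⧸ AddSubgroup.closure (K0Relations A)

noncomputable instance (A : Type*) [Ring A] [StarRing A] : AddCommGroup (K0 A) :=
  QuotientAddGroup.Quotient.addCommGroup _

/-- The `K₀`-class of an element of `A`, viewed as a `1 × 1` matrix. -/
def K0.classOf {A : Type*} [Ring A] [StarRing A] (a : A) : K0 A :=
  QuotientAddGroup.mk (FreeAbelianGroup.of ⟨1, Matrix.of fun _ _ => a⟩)

section Aux

variable {A : Type*} [Ring A] [StarRing A]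

lemma K0.rel_zero {x : FreeAbelianGroup (K0Gen A)} (hx : x ∈ K0Relations A) :
    (QuotientAddGroup.mk x : K0 A) = 0 :=
  (QuotientAddGroup.eq_zero_iff x).2 (AddSubgroup.subset_closure hx)

lemma K0.mvn_eq {p q : K0Gen A} (hp : p.IsProj) (hq : q.IsProj) (h : p.MvN q) :
    (QuotientAddGroup.mk (FreeAbelianGroup.of p) : K0 A) =
      QuotientAddGroup.mk (FreeAbelianGroup.of q) := by
  have h0 := K0.rel_zero (A := A) ⟨p, q, hp, hq, Or.inr ⟨h, rfl⟩⟩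
  rwa [QuotientAddGroup.mk_sub, sub_eq_zero] at h0

lemma K0.dsum_eq {p q : K0Gen A} (hp : p.IsProj) (hq : q.IsProj) :
    (QuotientAddGroup.mk (FreeAbelianGroup.of (p.dsum q)) : K0 A) =
      QuotientAddGroup.mk (FreeAbelianGroup.of p) + QuotientAddGroup.mk (FreeAbelianGroup.of q) := by
  have h0 := K0.rel_zero (A := A) ⟨p, q, hp, hq, Or.inl rfl⟩
  rw [QuotientAddGroup.mk_sub, QuotientAddGroup.mk_sub, sub_sub, sub_eq_zero] at h0
  exact h0

lemma K0.reindex_mul {α β : Type*} [Fintype α] [Fintype β] [DecidableEq α] [DecidableEq β]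
    (e : α ≃ β) (M N : Matrix α α A) :
    (Matrix.reindex e e M) * (Matrix.reindex e e N) = Matrix.reindex e e (M * N) := by
  rw [Matrix.reindex_apply, Matrix.reindex_apply, Matrix.reindex_apply,
    Matrix.submatrix_mul_equiv]

/-- 1×1 generator. -/
def K0.g1 (a : A) : K0Gen A := ⟨1, Matrix.of fun _ _ => a⟩

lemma K0.g1_isProj {a : A} (h1 : a * a = a) (h2 : star a = a) : (K0.g1 a).IsProj := by
  constructor
  · show (Matrix.of fun _ _ => a : Matrix (Fin 1) (Fin 1) A) * (Matrix.of (fun _ _ => a) : Matrix (Fin 1) (Fin 1) A) = Matrix.of fun _ _ => a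
    ext i j
    simp [K0.g1, Matrix.mul_apply, Fin.sum_univ_one, h1]
  · show star (Matrix.of fun _ _ => a : Matrix (Fin 1) (Fin 1) A) = Matrix.of fun _ _ => a
    ext i j
    simp [K0.g1, Matrix.star_eq_conjTranspose, Matrix.conjTranspose_apply, h2]

lemma K0.mvn_g1 {a b w : A} (h1 : star w * w = a) (h2 : w * star w = b) :
    (K0.g1 a).MvN (K0.g1 b) := by
  refine ⟨Matrix.of fun _ _ => w, ?_, ?_⟩
  · show (Matrix.of fun _ _ => w : Matrix (Fin 1) (Fin 1) A)ᴴ * (Matrix.of (fun _ _ => w) : Matrix (Fin 1) (Fin 1) A) = Matrix.of fun _ _ => a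
    ext i j
    simp [K0.g1, Matrix.mul_apply, Fin.sum_univ_one, Matrix.conjTranspose_apply, h1]
  · show (Matrix.of fun _ _ => w : Matrix (Fin 1) (Fin 1) A) * (Matrix.of (fun _ _ => w) : Matrix (Fin 1) (Fin 1) A)ᴴ = Matrix.of fun _ _ => b
    ext i j
    simp [K0.g1, Matrix.mul_apply, Fin.sum_univ_one, Matrix.conjTranspose_apply, h2]

lemma K0.dsum_isProj {p q : K0Gen A} (hp : p.IsProj) (hq : q.IsProj) :
    (p.dsum q).IsProj := by
  constructor
  · show (Matrix.reindex finSumFinEquiv finSumFinEquiv (Matrix.fromBlocks p.2 0 0 q.2) : Matrix (Fin (p.1 + q.1)) (Fin (p.1 + q.1)) A) * (Matrix.reindex finSumFinEquiv finSumFinEquiv (Matrix.fromBlocks p.2 0 0 q.2) : Matrix (Fin (p.1 + q.1)) (Fin (p.1 + q.1)) A) = (Matrix.reindex finSumFinEquiv finSumFinEquiv (Matrix.fromBlocks p.2 0 0 q.2) : Matrix (Fin (p.1 + q.1)) (Fin (p.1 + q.1)) A)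
    rw [K0.reindex_mul, Matrix.fromBlocks_multiply]
    simp [hp.1, hq.1]
  · show star (Matrix.reindex finSumFinEquiv finSumFinEquiv (Matrix.fromBlocks p.2 0 0 q.2) : Matrix (Fin (p.1 + q.1)) (Fin (p.1 + q.1)) A) = (Matrix.reindex finSumFinEquiv finSumFinEquiv (Matrix.fromBlocks p.2 0 0 q.2) : Matrix (Fin (p.1 + q.1)) (Fin (p.1 + q.1)) A)
    rw [Matrix.star_eq_conjTranspose, Matrix.conjTranspose_reindex,
      Matrix.fromBlocks_conjTranspose]
    simp [← Matrix.star_eq_conjTranspose, hp.2, hq.2]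

lemma K0.mvn_dsum {a b a' b' v1 v2 v3 v4 : A}
    (e11 : star v1 * v1 + star v3 * v3 = a) (e12 : star v1 * v2 + star v3 * v4 = 0)
    (e21 : star v2 * v1 + star v4 * v3 = 0) (e22 : star v2 * v2 + star v4 * v4 = b)
    (f11 : v1 * star v1 + v2 * star v2 = a') (f12 : v1 * star v3 + v2 * star v4 = 0)
    (f21 : v3 * star v1 + v4 * star v2 = 0) (f22 : v3 * star v3 + v4 * star v4 = b') :
    ((K0.g1 a).dsum (K0.g1 b)).MvN ((K0.g1 a').dsum (K0.g1 b')) := by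
  set V1 : Matrix (Fin 1) (Fin 1) A := Matrix.of fun _ _ => v1 with hV1
  set V2 : Matrix (Fin 1) (Fin 1) A := Matrix.of fun _ _ => v2 with hV2
  set V3 : Matrix (Fin 1) (Fin 1) A := Matrix.of fun _ _ => v3 with hV3
  set V4 : Matrix (Fin 1) (Fin 1) A := Matrix.of fun _ _ => v4 with hV4
  refine ⟨Matrix.reindex finSumFinEquiv finSumFinEquiv (Matrix.fromBlocks V1 V2 V3 V4), ?_, ?_⟩
  · show (Matrix.reindex finSumFinEquiv finSumFinEquiv (Matrix.fromBlocks V1 V2 V3 V4))ᴴ *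
        Matrix.reindex finSumFinEquiv finSumFinEquiv (Matrix.fromBlocks V1 V2 V3 V4) =
      Matrix.reindex finSumFinEquiv finSumFinEquiv
        (Matrix.fromBlocks (Matrix.of fun _ _ => a) 0 0 (Matrix.of fun _ _ => b))
    rw [Matrix.conjTranspose_reindex, K0.reindex_mul]
    refine congrArg _ ?_
    rw [Matrix.fromBlocks_conjTranspose, Matrix.fromBlocks_multiply]
    ext (i | i) (j | j) <;>
      simp [hV1, hV2, hV3, hV4, Matrix.mul_apply, Fin.sum_univ_one,
        Matrix.conjTranspose_apply, e11, e12, e21, e22]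
  · show Matrix.reindex finSumFinEquiv finSumFinEquiv (Matrix.fromBlocks V1 V2 V3 V4) *
        (Matrix.reindex finSumFinEquiv finSumFinEquiv (Matrix.fromBlocks V1 V2 V3 V4))ᴴ =
      Matrix.reindex finSumFinEquiv finSumFinEquiv
        (Matrix.fromBlocks (Matrix.of fun _ _ => a') 0 0 (Matrix.of fun _ _ => b'))
    rw [Matrix.conjTranspose_reindex, K0.reindex_mul]
    refine congrArg _ ?_
    rw [Matrix.fromBlocks_conjTranspose, Matrix.fromBlocks_multiply]
    ext (i | i) (j | j) <;>
      simp [hV1, hV2, hV3, hV4, Matrix.mul_apply, Fin.sum_univ_one,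
        Matrix.conjTranspose_apply, f11, f12, f21, f22]

lemma K0.g1_zero : (K0.g1 (0 : A)) = ⟨1, (0 : Matrix (Fin 1) (Fin 1) A)⟩ := by
  have h : (Matrix.of fun _ _ => (0 : A) : Matrix (Fin 1) (Fin 1) A) = 0 := by
    ext i j; simp
  exact congrArg (fun M => (⟨1, M⟩ : K0Gen A)) h

lemma K0.classOf_zero : K0.classOf (0 : A) = 0 := by
  have hproj : (K0.g1 (0 : A)).IsProj := K0.g1_isProj (by simp) (by simp)
  have hd := K0.dsum_eq hproj hproj
  have hm : ((K0.g1 (0 : A)).dsum (K0.g1 (0 : A))).MvN (K0.g1 (0 : A)) := by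
    rw [K0.g1_zero]
    refine ⟨(0 : Matrix (Fin 1) (Fin (1 + 1)) A), ?_, ?_⟩
    · show (0 : Matrix (Fin 1) (Fin (1 + 1)) A)ᴴ * (0 : Matrix (Fin 1) (Fin (1 + 1)) A) = Matrix.reindex finSumFinEquiv finSumFinEquiv (Matrix.fromBlocks (0 : Matrix (Fin 1) (Fin 1) A) 0 0 (0 : Matrix (Fin 1) (Fin 1) A))
      simp [K0Gen.dsum, Matrix.fromBlocks_zero]
    · show (0 : Matrix (Fin 1) (Fin (1 + 1)) A) * (0 : Matrix (Fin 1) (Fin (1 + 1)) A)ᴴ = (0 : Matrix (Fin 1) (Fin 1) A)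
      simp
  have heq := K0.mvn_eq (K0.dsum_isProj hproj hproj) hproj hm
  exact left_eq_add.mp (heq.symm.trans hd)

end Aux

/-- If `p` is a projection in a unital C*-algebra and `J` is a self-adjoint
involution with `Jp + pJ = J`, then `[p] = [(1+J)/2]` and `[p] = [(1-J)/2]` in `K₀(A)`;
in particular `2[p] = [1]` in `K₀(A)`. -/
theorem projection_anticommuting_involution_K0
    {A : Type*} [NormedRing A] [StarRing A] [CStarRing A]
    [NormedAlgebra ℂ A] [CompleteSpace A] [StarModule ℂ A]
    (p J : A) (hp : IsProjectionElem p) (hJ : star J = J) (hJ2 : J * J = 1)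
    (hJp : J * p + p * J = J) :
    K0.classOf p = K0.classOf ((2 : ℂ)⁻¹ • (1 + J)) ∧
    K0.classOf p = K0.classOf ((2 : ℂ)⁻¹ • (1 - J)) ∧
    (2 : ℤ) • K0.classOf p = K0.classOf (1 : A) := by
  obtain ⟨hp1, hp2⟩ := hp
  set c : ℂ := (2 : ℂ)⁻¹ with hc
  set qp : A := c • (1 + J) with hqp
  set qm : A := c • (1 - J) with hqm
  have hcc2 : c * c * 2 = c := by rw [hc]; norm_num
  have hc2 : c * 2 = 1 := by rw [hc]; norm_num
  -- basic element computations
  have hpJp : p * J * p = 0 := by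
    have h1 : p * J * p + p * J = p * J := by
      calc p * J * p + p * J = p * (J * p) + p * (p * J) := by
            rw [mul_assoc, ← mul_assoc p p J, hp1]
        _ = p * (J * p + p * J) := (mul_add _ _ _).symm
        _ = p * J := by rw [hJp]
    exact add_eq_right.mp h1
  have hJpJ : J * p * J = 1 - p := by
    have h1 : J * p * J + p = 1 := by
      calc J * p * J + p = (J * p + p * J) * J - p * (J * J) + p := by noncomm_ring
        _ = 1 := by rw [hJp, hJ2]; noncomm_ring
    exact eq_sub_of_add_eq h1
  have hstarc : star c = c := by simp [hc]
  have hstar1J : star (1 + J) = 1 + J := by rw [star_add, star_one, hJ]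
  have hstar1J' : star (1 - J) = 1 - J := by rw [star_sub, star_one, hJ]
  have hsqp : (1 + J) * (1 + J) = (1 + 1) + (J + J) := by
    calc (1 + J) * (1 + J) = (1 + J * J) + (J + J) := by noncomm_ring
      _ = (1 + 1) + (J + J) := by rw [hJ2]
  have hsqm : (1 - J) * (1 - J) = (1 + 1) - (J + J) := by
    calc (1 - J) * (1 - J) = (1 + J * J) - (J + J) := by noncomm_ring
      _ = (1 + 1) - (J + J) := by rw [hJ2]
  have hstarqp : star qp = qp := by rw [hqp, star_smul, hstarc, hstar1J]
  have hstarqm : star qm = qm := by rw [hqm, star_smul, hstarc, hstar1J']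
  have hqpsq : qp * qp = qp := by
    rw [hqp, smul_mul_smul_comm, hsqp]
    have h2 : ((1 + 1) + (J + J) : A) = (2 : ℂ) • (1 + J) := by
      rw [two_smul]; abel
    rw [h2, smul_smul, hcc2]
  have hqmsq : qm * qm = qm := by
    rw [hqm, smul_mul_smul_comm, hsqm]
    have h2 : ((1 + 1) - (J + J) : A) = (2 : ℂ) • (1 - J) := by
      rw [two_smul]; abel
    rw [h2, smul_smul, hcc2]
  have hqpqm : qp * qm = 0 := by
    rw [hqp, hqm, smul_mul_smul_comm]
    have h2 : ((1 + J) * (1 - J) : A) = (1 - J * J) + (J - J) := by noncomm_ring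
    rw [h2, hJ2]
    simp
  have hqmqp : qm * qp = 0 := by
    rw [hqp, hqm, smul_mul_smul_comm]
    have h2 : ((1 - J) * (1 + J) : A) = (1 - J * J) + (J - J) := by noncomm_ring
    rw [h2, hJ2]
    simp
  have hqpqm1 : qp + qm = 1 := by
    rw [hqp, hqm, ← smul_add]
    have h2 : ((1 + J) + (1 - J) : A) = (2 : ℂ) • (1 : A) := by
      rw [two_smul]; abel
    rw [h2, smul_smul, hc2, one_smul]
  -- the partial isometries
  set s : ℂ := (Complex.ofReal (Real.sqrt 2))⁻¹ with hs
  have hstars : star s = s := by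
    rw [hs, star_inv₀]
    simp [Complex.star_def, Complex.conj_ofReal]
  have hss : s * s = c := by
    rw [hs, ← mul_inv, ← Complex.ofReal_mul, Real.mul_self_sqrt (by norm_num : (0:ℝ) ≤ 2), hc]
    norm_num
  set wp : A := s • ((1 + J) * p) with hwp
  set wm : A := s • ((1 - J) * p) with hwm
  have hstarwp : star wp = s • (p * (1 + J)) := by
    rw [hwp, star_smul, hstars, StarMul.star_mul, hp2, hstar1J]
  have hstarwm : star wm = s • (p * (1 - J)) := by
    rw [hwm, star_smul, hstars, StarMul.star_mul, hp2, hstar1J']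
  have hpp2 : c • (p + p) = p := by
    rw [← two_smul ℂ p, smul_smul, hc2, one_smul]
  have A1 : star wp * wp = p := by
    rw [hstarwp, hwp, smul_mul_smul_comm, hss]
    have h2 : (p * (1 + J)) * ((1 + J) * p) = p + p := by
      calc (p * (1 + J)) * ((1 + J) * p) = p * ((1 + J) * (1 + J)) * p := by noncomm_ring
        _ = p * ((1 + 1) + (J + J)) * p := by rw [hsqp]
        _ = (p * p + p * p) + (p * J * p + p * J * p) := by noncomm_ring
        _ = p + p := by rw [hp1, hpJp]; abel
    rw [h2]; exact hpp2
  have A2 : wp * star wp = qp := by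
    rw [hstarwp, hwp, smul_mul_smul_comm, hss]
    have h2 : ((1 + J) * p) * (p * (1 + J)) = 1 + J := by
      calc ((1 + J) * p) * (p * (1 + J)) = (1 + J) * (p * p) * (1 + J) := by noncomm_ring
        _ = p + (J * p + p * J) + J * p * J := by rw [hp1]; noncomm_ring
        _ = p + J + (1 - p) := by rw [hJp, hJpJ]
        _ = 1 + J := by abel
    rw [h2, hqp]
  have B1 : star wm * wm = p := by
    rw [hstarwm, hwm, smul_mul_smul_comm, hss]
    have h2 : (p * (1 - J)) * ((1 - J) * p) = p + p := by
      calc (p * (1 - J)) * ((1 - J) * p) = p * ((1 - J) * (1 - J)) * p := by noncomm_ring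
        _ = p * ((1 + 1) - (J + J)) * p := by rw [hsqm]
        _ = (p * p + p * p) - (p * J * p + p * J * p) := by noncomm_ring
        _ = p + p := by rw [hp1, hpJp]; abel
    rw [h2]; exact hpp2
  have B2 : wm * star wm = qm := by
    rw [hstarwm, hwm, smul_mul_smul_comm, hss]
    have h2 : ((1 - J) * p) * (p * (1 - J)) = 1 - J := by
      calc ((1 - J) * p) * (p * (1 - J)) = (1 - J) * (p * p) * (1 - J) := by noncomm_ring
        _ = p - (J * p + p * J) + J * p * J := by rw [hp1]; noncomm_ring
        _ = p - J + (1 - p) := by rw [hJp, hJpJ]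
        _ = 1 - J := by abel
    rw [h2, hqm]
  -- projection facts for generators
  have hgp : (K0.g1 p).IsProj := K0.g1_isProj hp1 hp2
  have hgqp : (K0.g1 qp).IsProj := K0.g1_isProj hqpsq hstarqp
  have hgqm : (K0.g1 qm).IsProj := K0.g1_isProj hqmsq hstarqm
  have hg1 : (K0.g1 (1 : A)).IsProj := K0.g1_isProj (by simp) (by simp)
  have hg0 : (K0.g1 (0 : A)).IsProj := K0.g1_isProj (by simp) (by simp)
  -- the first two conclusions
  have c1 : K0.classOf p = K0.classOf qp := K0.mvn_eq hgp hgqp (K0.mvn_g1 A1 A2)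
  have c2 : K0.classOf p = K0.classOf qm := K0.mvn_eq hgp hgqm (K0.mvn_g1 B1 B2)
  refine ⟨c1, c2, ?_⟩
  -- the third conclusion
  have hmvn : ((K0.g1 qp).dsum (K0.g1 qm)).MvN ((K0.g1 (1 : A)).dsum (K0.g1 (0 : A))) := by
    refine K0.mvn_dsum (v1 := qp) (v2 := qm) (v3 := 0) (v4 := 0) ?_ ?_ ?_ ?_ ?_ ?_ ?_ ?_ <;>
      simp [hstarqp, hstarqm, hqpsq, hqmsq, hqpqm, hqmqp, hqpqm1]
  have hd1 := K0.dsum_eq hgqp hgqm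
  have hd2 := K0.dsum_eq hg1 hg0
  have hmid := K0.mvn_eq (K0.dsum_isProj hgqp hgqm) (K0.dsum_isProj hg1 hg0) hmvn
  calc (2 : ℤ) • K0.classOf p = K0.classOf p + K0.classOf p := two_zsmul _
    _ = K0.classOf qp + K0.classOf qm := congrArg₂ (· + ·) c1 c2
    _ = @id (K0 A) (QuotientAddGroup.mk (FreeAbelianGroup.of ((K0.g1 qp).dsum (K0.g1 qm)))) := hd1.symm
    _ = @id (K0 A) (QuotientAddGroup.mk (FreeAbelianGroup.of ((K0.g1 (1 : A)).dsum (K0.g1 (0 : A))))) := hmid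
    _ = K0.classOf (1 : A) + K0.classOf (0 : A) := hd2
    _ = K0.classOf (1 : A) := by rw [K0.classOf_zero, add_zero]
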